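/- For every rotation scheme ε_L, ε_R : ZMod 3 → ℤˣ, the number of orbits of the face-tracing permutation F(ε_L, ε_R) on the dart type D is either 3 or 1; equivalently, by Euler's formula f = 5 − 2h, the genus h of the cellular embedding of K_{3,3} determined by the rotation scheme is either 1 or 2. -/

import Mathlib

/-- The dart type of `K_{3,3}`: `(i, j, true)` is the directed edge from left-vertex `i`
to right-vertex `j`, and `(i, j, false)` the directed edge from right-vertex `j`
to left-vertex `i`. -/
abbrev Dart : Type := ZMod 3 × ZMod 3 × Bool

/-- The value of an orientation `ε : ZMod 3 → ℤˣ`: the absolute value of the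
sum of the orientations `±1` of the three vertices of one part of `K_{3,3}`. -/
def value (ε : ZMod 3 → ℤˣ) : ℕ := (∑ i : ZMod 3, (ε i : ℤ)).natAbs

/-- The face-tracing permutation of the darts of `K_{3,3}` determined by the
rotation scheme `(εL, εR)`, implementing the rotation rule. -/
def faceTracing (εL εR : ZMod 3 → ℤˣ) : Equiv.Perm Dart where
  toFun := fun d => match d with
    | (i, j, true) => (i + ((εR j : ℤ) : ZMod 3), j, false)
    | (i, j, false) => (i, j + ((εL i : ℤ) : ZMod 3), true)
  invFun := fun d => match d with
    | (i, j, false) => (i - ((εR j : ℤ) : ZMod 3), j, true)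
    | (i, j, true) => (i, j - ((εL i : ℤ) : ZMod 3), false)
  left_inv := by rintro ⟨i, j, _ | _⟩ <;> simp
  right_inv := by rintro ⟨i, j, _ | _⟩ <;> simp

/-- Two darts are on the same cycle of a permutation of the (18-element) dart type
iff some power `f ^ n` with `n < 20` maps one to the other. -/
lemma sameCycle_iff_range (f : Equiv.Perm Dart) (x y : Dart) :
    f.SameCycle x y ↔ ∃ n ∈ List.range 20, (f ^ n) x = y := by
  constructor
  · intro h
    obtain ⟨i, _, hle, hi⟩ := Equiv.Perm.SameCycle.exists_pow_eq f h
    refine ⟨i, List.mem_range.2 ?_, hi⟩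
    have : (f.cycleOf x).support.card ≤ 18 := by
      have := Finset.card_le_univ (f.cycleOf x).support
      simpa using this
    omega
  · rintro ⟨n, _, hn⟩
    exact ⟨n, by simpa using hn⟩

instance decSC (f : Equiv.Perm Dart) : DecidableRel f.SameCycle := fun x y =>
  decidable_of_iff _ (sameCycle_iff_range f x y).symm

lemma orbitRel_iff (f : Equiv.Perm Dart) (x y : Dart) :
    (MulAction.orbitRel (Subgroup.zpowers f) Dart).r x y ↔ f.SameCycle y x := by
  constructor
  · rintro ⟨⟨g, i, rfl⟩, h⟩
    exact ⟨i, h⟩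
  · rintro ⟨i, h⟩
    exact ⟨⟨f ^ i, i, rfl⟩, h⟩

instance decOrb (f : Equiv.Perm Dart) :
    DecidableRel (MulAction.orbitRel (Subgroup.zpowers f) Dart).r := fun x y =>
  decidable_of_iff _ (orbitRel_iff f x y).symm

instance finOrb (f : Equiv.Perm Dart) :
    Fintype (MulAction.orbitRel.Quotient (Subgroup.zpowers f) Dart) :=
  @Quotient.fintype Dart _ (MulAction.orbitRel _ _) (decOrb f)

set_option maxRecDepth 100000 in
/-- For every rotation scheme, the number of orbits (faces) of the face-tracing
permutation on the darts of `K_{3,3}` is either `3` or `1`; equivalently, by Euler's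
formula `f = 5 - 2h`, the genus `h` of the corresponding cellular embedding of
`K_{3,3}` is either `1` or `2`. -/
theorem k33_faces_three_or_one (εL εR : ZMod 3 → ℤˣ) :
    (Nat.card (MulAction.orbitRel.Quotient (Subgroup.zpowers (faceTracing εL εR)) Dart) = 3 ∨
      Nat.card (MulAction.orbitRel.Quotient (Subgroup.zpowers (faceTracing εL εR)) Dart) = 1) ∧
    ∀ h : ℕ,
      (Nat.card (MulAction.orbitRel.Quotient (Subgroup.zpowers (faceTracing εL εR)) Dart) : ℤ) =
        5 - 2 * h → (h = 1 ∨ h = 2) := by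
  suffices H : (Nat.card (MulAction.orbitRel.Quotient (Subgroup.zpowers (faceTracing εL εR)) Dart) = 3 ∨
      Nat.card (MulAction.orbitRel.Quotient (Subgroup.zpowers (faceTracing εL εR)) Dart) = 1) by
    refine ⟨H, fun h hh => ?_⟩
    rcases H with H | H <;> rw [H] at hh <;> push_cast at hh <;> omega
  have hL : εL = fun i : ZMod 3 => if i = 0 then εL 0 else if i = 1 then εL 1 else εL 2 := by
    funext i; fin_cases i <;> rfl
  have hR : εR = fun i : ZMod 3 => if i = 0 then εR 0 else if i = 1 then εR 1 else εR 2 := by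
    funext i; fin_cases i <;> rfl
  rw [hL, hR]
  rcases Int.units_eq_one_or (εL 0) with h | h <;> rw [h] <;> clear h <;>
  rcases Int.units_eq_one_or (εL 1) with h | h <;> rw [h] <;> clear h <;>
  rcases Int.units_eq_one_or (εL 2) with h | h <;> rw [h] <;> clear h <;>
  rcases Int.units_eq_one_or (εR 0) with h | h <;> rw [h] <;> clear h <;>
  rcases Int.units_eq_one_or (εR 1) with h | h <;> rw [h] <;> clear h <;>
  rcases Int.units_eq_one_or (εR 2) with h | h <;> rw [h] <;> clear h <;>
  rw [Nat.card_eq_fintype_card] <;> decide
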